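/- Let d ≥ 1, σ > d/2, and let ψ : ℝ^d → ℂ be measurable with M := ∫_{ℝ^d} (1+|s|²)^σ |ψ(s)|² ds < ∞. Then ∑_{m ∈ ℤ^d} (∫_{m + [0,1)^d} |ψ(s)|² ds)^{1/2} ≤ C · M^{1/2}, where C = (∑_{m ∈ ℤ^d} sup_{s ∈ m+[0,1)^d} (1+|s|²)^{−σ})^{1/2} is finite. -/

import Mathlib

open MeasureTheory

lemma aux_summable_pi {d : ℕ} {g : ℤ → ℝ} (hg : Summable g) (hg0 : ∀ k, 0 ≤ g k) :
    Summable (fun m : Fin d → ℤ => ∏ i, g (m i)) := by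
  induction d with
  | zero => exact .of_finite
  | succ n ih =>
    have h2 : Summable (fun x : ℤ × (Fin n → ℤ) => g x.1 * ∏ i, g (x.2 i)) :=
      Summable.mul_of_nonneg (f := g) (g := fun m : Fin n → ℤ => ∏ i, g (m i))
        hg ih (fun k => hg0 k) (fun m => Finset.prod_nonneg fun i _ => hg0 _)
    rw [← Equiv.summable_iff (Fin.consEquiv (fun _ : Fin (n+1) => ℤ))]
    convert h2 using 1
    ext x
    simp [Fin.consEquiv, Fin.prod_univ_succ]

lemma aux_summable_g {d : ℕ} (hd : 1 ≤ d) {σ : ℝ} (hσ : (d : ℝ) / 2 < σ) :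
    Summable (fun k : ℤ => (1 + (k : ℝ) ^ 2) ^ (-(σ / d))) := by
  have hd0 : (0:ℝ) < d := by exact_mod_cast hd
  have hσ0 : 0 < σ := lt_of_le_of_lt (by positivity) hσ
  have hτ0 : (0:ℝ) < σ / d := by positivity
  have hτ : (1:ℝ) < 2 * (σ / d) := by
    rw [← mul_div_assoc, lt_div_iff₀ hd0, one_mul]; linarith
  have hsum : Summable (fun k : ℤ => |(k:ℝ)| ^ (-(2 * (σ / d))) +
      Set.indicator ({0} : Set ℤ) (fun _ => (1:ℝ)) k) := by
    refine (Real.summable_abs_int_rpow hτ).add ?_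
    refine summable_of_ne_finset_zero (s := {(0:ℤ)}) (fun k hk => ?_)
    rw [Finset.mem_singleton] at hk
    simp [Set.indicator_of_notMem, hk]
  refine hsum.of_nonneg_of_le (fun k => Real.rpow_nonneg (by positivity) _) (fun k => ?_)
  rcases eq_or_ne k 0 with rfl | hk
  · have hne : (-(2 * (σ / d))) ≠ 0 := by intro h; rw [neg_eq_zero] at h; nlinarith
    simp [Real.zero_rpow hne]
  · have hk2 : (0:ℝ) < (k:ℝ)^2 := by positivity
    have h1 : (1 + (k : ℝ) ^ 2) ^ (-(σ / d)) ≤ ((k:ℝ)^2) ^ (-(σ / d)) :=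
      Real.rpow_le_rpow_of_nonpos hk2 (by linarith) (by linarith)
    have h2 : ((k:ℝ)^2) ^ (-(σ / d)) = |(k:ℝ)| ^ (-(2 * (σ / d))) := by
      rw [← sq_abs, ← Real.rpow_natCast |(k:ℝ)| 2, ← Real.rpow_mul (abs_nonneg _)]
      congr 1; push_cast; ring
    have h3 : (0:ℝ) ≤ Set.indicator ({0} : Set ℤ) (fun _ => (1:ℝ)) k :=
      Set.indicator_nonneg (fun _ _ => zero_le_one) _
    calc (1 + (k : ℝ) ^ 2) ^ (-(σ / d)) ≤ |(k:ℝ)| ^ (-(2 * (σ / d))) := h1.trans_eq h2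
      _ ≤ _ := by linarith

theorem stmt6 (d : ℕ) (hd : 1 ≤ d) (σ : ℝ) (hσ : (d : ℝ) / 2 < σ)
    (ψ : EuclideanSpace ℝ (Fin d) → ℂ) (hψ : Measurable ψ)
    (hint : Integrable (fun s : EuclideanSpace ℝ (Fin d) => (1 + ‖s‖ ^ 2) ^ σ * ‖ψ s‖ ^ 2)) :
    Summable (fun m : Fin d → ℤ =>
      sSup ((fun s : EuclideanSpace ℝ (Fin d) => (1 + ‖s‖ ^ 2) ^ (-σ)) ''
        {s : EuclideanSpace ℝ (Fin d) | ∀ i, (m i : ℝ) ≤ s i ∧ s i < m i + 1})) ∧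
    ∑' m : Fin d → ℤ,
        Real.sqrt (∫ s in {s : EuclideanSpace ℝ (Fin d) | ∀ i, (m i : ℝ) ≤ s i ∧ s i < m i + 1},
          ‖ψ s‖ ^ 2) ≤
      Real.sqrt (∑' m : Fin d → ℤ,
          sSup ((fun s : EuclideanSpace ℝ (Fin d) => (1 + ‖s‖ ^ 2) ^ (-σ)) ''
            {s : EuclideanSpace ℝ (Fin d) | ∀ i, (m i : ℝ) ≤ s i ∧ s i < m i + 1})) *
        Real.sqrt (∫ s : EuclideanSpace ℝ (Fin d), (1 + ‖s‖ ^ 2) ^ σ * ‖ψ s‖ ^ 2) := by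
  classical
  have hσ0 : 0 < σ := lt_of_le_of_lt (by positivity) hσ
  have hd0 : (1:ℝ) ≤ d := by exact_mod_cast hd
  set Q : (Fin d → ℤ) → Set (EuclideanSpace ℝ (Fin d)) :=
    fun m => {s : EuclideanSpace ℝ (Fin d) | ∀ i, (m i : ℝ) ≤ s i ∧ s i < m i + 1} with hQdef
  set v : EuclideanSpace ℝ (Fin d) → ℝ :=
    fun s : EuclideanSpace ℝ (Fin d) => (1 + ‖s‖ ^ 2) ^ (-σ) with hvdef
  set A : (Fin d → ℤ) → ℝ := fun m => sSup (v '' Q m) with hAdef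
  have hpos : ∀ s : EuclideanSpace ℝ (Fin d), (0:ℝ) < 1 + ‖s‖ ^ 2 := fun s => by positivity
  -- coordinates are continuous
  have hcoord : ∀ i : Fin d, Continuous fun s : EuclideanSpace ℝ (Fin d) => s i := fun i =>
    (continuous_apply i).comp (PiLp.continuous_ofLp 2 (fun _ : Fin d => ℝ))
  have hQmeas : ∀ m, MeasurableSet (Q m) := by
    intro m
    have hQeq : Q m = ⋂ i, (fun s : EuclideanSpace ℝ (Fin d) => s i) ⁻¹'
        (Set.Ico ((m i : ℝ)) (m i + 1)) := by
      ext s; simp [hQdef, Set.mem_iInter, Set.mem_Ico]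
    rw [hQeq]
    exact MeasurableSet.iInter fun i => (hcoord i).measurable measurableSet_Ico
  have hQdisj : Pairwise (Function.onFun Disjoint Q) := by
    intro m m' hne
    refine Set.disjoint_left.mpr fun s hs hs' => hne ?_
    funext i
    have h1 := hs i
    have h2 := hs' i
    have e1 : ⌊s i⌋ = m i := Int.floor_eq_iff.mpr ⟨h1.1, h1.2⟩
    have e2 : ⌊s i⌋ = m' i := Int.floor_eq_iff.mpr ⟨h2.1, h2.2⟩
    rw [← e1, e2]
  have hQunion : (⋃ m, Q m) = Set.univ := by
    ext s
    simp only [Set.mem_iUnion, Set.mem_univ, iff_true]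
    exact ⟨fun i => ⌊s i⌋, fun i => ⟨Int.floor_le _, Int.lt_floor_add_one _⟩⟩
  have hnorm : ∀ s : EuclideanSpace ℝ (Fin d), ‖s‖ ^ 2 = ∑ i, (s i) ^ 2 := by
    intro s
    rw [EuclideanSpace.norm_eq, Real.sq_sqrt (Finset.sum_nonneg fun i _ => sq_nonneg _)]
    simp [Real.norm_eq_abs, sq_abs]
  -- nonempty cubes and bounded sup
  have hQne : ∀ m : Fin d → ℤ,
      ((WithLp.equiv 2 (Fin d → ℝ)).symm (fun i => (m i : ℝ))) ∈ Q m := by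
    intro m i
    show (m i : ℝ) ≤ (m i : ℝ) ∧ (m i : ℝ) < m i + 1
    exact ⟨le_refl _, by linarith⟩
  have hbdd : ∀ m, BddAbove (v '' Q m) := by
    intro m
    refine ⟨1, fun y hy => ?_⟩
    obtain ⟨s, _, rfl⟩ := hy
    exact Real.rpow_le_one_of_one_le_of_nonpos (by nlinarith [sq_nonneg ‖s‖]) (by linarith)
  have hA0 : ∀ m, 0 ≤ A m := fun m =>
    le_trans (Real.rpow_nonneg (hpos _).le _) (le_csSup (hbdd m) ⟨_, hQne m, rfl⟩)
  -- bound A m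
  set g : ℤ → ℝ := fun k => (1 + (k:ℝ)^2) ^ (-(σ / d)) with hgdef
  have hg0 : ∀ k, 0 ≤ g k := fun k => Real.rpow_nonneg (by positivity) _
  set K : ℝ := (1 + 2 * d) ^ σ with hKdef
  have hK0 : 0 ≤ K := Real.rpow_nonneg (by positivity) _
  have hAle : ∀ m, A m ≤ K * ∏ i, g (m i) := by
    intro m
    refine Real.sSup_le (fun y hy => ?_)
      (mul_nonneg hK0 (Finset.prod_nonneg fun i _ => hg0 _))
    obtain ⟨s, hs, rfl⟩ := hy
    set q : ℝ := 1 + ∑ i, ((m i : ℝ))^2 with hqdef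
    have hq0 : (0:ℝ) < q := by positivity
    have hcoordb : ∀ i, ((m i : ℝ))^2 ≤ 2 * (s i)^2 + 2 := by
      intro i
      have h1 := (hs i).1
      have h2 := (hs i).2
      nlinarith [sq_nonneg (s i + (s i - (m i : ℝ)))]
    have hqs : q ≤ (1 + 2*d) * (1 + ‖s‖^2) := by
      rw [hnorm s]
      have hsum0 : (0:ℝ) ≤ ∑ i, (s i)^2 := Finset.sum_nonneg fun i _ => sq_nonneg _
      have h1 : ∑ i, ((m i : ℝ))^2 ≤ ∑ i, (2 * (s i)^2 + 2) :=
        Finset.sum_le_sum fun i _ => hcoordb i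
      have h2 : ∑ i, (2 * (s i)^2 + 2) = 2 * (∑ i, (s i)^2) + 2*d := by
        rw [Finset.sum_add_distrib, ← Finset.mul_sum]
        simp [Finset.card_univ]
        ring
      nlinarith [hsum0]
    have step1 : (1 + ‖s‖ ^ 2) ^ (-σ) ≤ (q / (1 + 2*d)) ^ (-σ) := by
      refine Real.rpow_le_rpow_of_nonpos (by positivity) ?_ (by linarith)
      rw [div_le_iff₀ (by positivity)]
      linarith [hqs]
    have step2 : (q / (1 + 2*d)) ^ (-σ) = K * q ^ (-σ) := by
      rw [Real.rpow_neg (by positivity), Real.div_rpow hq0.le (by positivity), inv_div,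
        Real.rpow_neg hq0.le, div_eq_mul_inv]
    have hprod_le : ∏ i, (1 + ((m i : ℝ))^2) ≤ q ^ (d:ℕ) := by
      have hh : ∀ i ∈ Finset.univ, (1 + ((m i : ℝ))^2) ≤ q := by
        intro i _
        rw [hqdef]
        have h5 : ((m i : ℝ))^2 ≤ ∑ j, ((m j : ℝ))^2 := by
          simpa using Finset.single_le_sum (f := fun j => ((m j : ℝ))^2)
            (fun j _ => sq_nonneg _) (Finset.mem_univ i)
        linarith
      have := Finset.prod_le_prod (f := fun i => 1 + ((m i : ℝ))^2) (g := fun _ => q)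
        (fun i _ => by positivity) hh
      simpa [Finset.prod_const, Finset.card_univ] using this
    have hprod0 : (0:ℝ) < ∏ i, (1 + ((m i : ℝ))^2) :=
      Finset.prod_pos fun i _ => by positivity
    have step3 : q ^ (-σ) ≤ ∏ i, g (m i) := by
      have e1 : q ^ (-σ) = (q ^ (d:ℕ)) ^ (-(σ/d)) := by
        rw [← Real.rpow_natCast q d, ← Real.rpow_mul hq0.le]
        congr 1
        field_simp
      have e2 : (q ^ (d:ℕ)) ^ (-(σ/d)) ≤ (∏ i, (1 + ((m i : ℝ))^2)) ^ (-(σ/d)) :=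
        Real.rpow_le_rpow_of_nonpos hprod0 hprod_le (neg_nonpos.mpr (by positivity))
      have e3 : (∏ i, (1 + ((m i : ℝ))^2)) ^ (-(σ/d)) = ∏ i, g (m i) := by
        rw [hgdef, ← Real.finset_prod_rpow _ _ (fun i _ => by positivity)]
      rw [e1]
      exact e2.trans_eq e3
    calc v s ≤ (q / (1 + 2*d)) ^ (-σ) := step1
      _ = K * q ^ (-σ) := step2
      _ ≤ K * ∏ i, g (m i) := mul_le_mul_of_nonneg_left step3 hK0
  have hAsum : Summable A :=
    Summable.of_nonneg_of_le hA0 hAle ((aux_summable_pi (aux_summable_g hd hσ) hg0).mul_left K)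
  -- integrability of ‖ψ‖²
  have h1w : ∀ s : EuclideanSpace ℝ (Fin d), (1:ℝ) ≤ (1 + ‖s‖ ^ 2) ^ σ := by
    intro s
    calc (1:ℝ) = (1:ℝ) ^ σ := (Real.one_rpow σ).symm
      _ ≤ (1 + ‖s‖ ^ 2) ^ σ := Real.rpow_le_rpow zero_le_one (by nlinarith [sq_nonneg ‖s‖]) hσ0.le
  have hIψ2 : Integrable (fun s : EuclideanSpace ℝ (Fin d) => ‖ψ s‖ ^ 2) := by
    refine hint.mono' (hψ.norm.pow_const 2).aestronglyMeasurable (ae_of_all _ fun s => ?_)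
    rw [Real.norm_eq_abs, abs_of_nonneg (by positivity)]
    nlinarith [h1w s, sq_nonneg ‖ψ s‖]
  set b : (Fin d → ℤ) → ℝ := fun m => ∫ s in Q m, (1 + ‖s‖ ^ 2) ^ σ * ‖ψ s‖ ^ 2 with hbdef
  set c : (Fin d → ℤ) → ℝ := fun m => ∫ s in Q m, ‖ψ s‖ ^ 2 with hcdef
  set I : ℝ := ∫ s : EuclideanSpace ℝ (Fin d), (1 + ‖s‖ ^ 2) ^ σ * ‖ψ s‖ ^ 2 with hIdef
  have hbsum : HasSum b I := by
    have h := hasSum_integral_iUnion hQmeas hQdisj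
      (hQunion ▸ hint.integrableOn :
        IntegrableOn (fun s : EuclideanSpace ℝ (Fin d) => (1 + ‖s‖ ^ 2) ^ σ * ‖ψ s‖ ^ 2)
          (⋃ m, Q m) volume)
    simpa [hQunion, hbdef, hIdef] using h
  have hb0 : ∀ m, 0 ≤ b m := fun m => setIntegral_nonneg (hQmeas m) (fun s _ => by positivity)
  have hc0 : ∀ m, 0 ≤ c m := fun m => setIntegral_nonneg (hQmeas m) (fun s _ => by positivity)
  have hI0 : 0 ≤ I := integral_nonneg fun s => by positivity
  have hcb : ∀ m, c m ≤ A m * b m := by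
    intro m
    have hle : ∀ s ∈ Q m, ‖ψ s‖ ^ 2 ≤ A m * ((1 + ‖s‖ ^ 2) ^ σ * ‖ψ s‖ ^ 2) := by
      intro s hs
      have hvw : v s * ((1 + ‖s‖ ^ 2) ^ σ * ‖ψ s‖ ^ 2) = ‖ψ s‖ ^ 2 := by
        rw [hvdef, ← mul_assoc, ← Real.rpow_add (hpos s), neg_add_cancel, Real.rpow_zero, one_mul]
      have hvA : v s ≤ A m := le_csSup (hbdd m) ⟨s, hs, rfl⟩
      calc ‖ψ s‖ ^ 2 = v s * ((1 + ‖s‖ ^ 2) ^ σ * ‖ψ s‖ ^ 2) := hvw.symm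
        _ ≤ A m * ((1 + ‖s‖ ^ 2) ^ σ * ‖ψ s‖ ^ 2) :=
          mul_le_mul_of_nonneg_right hvA (by positivity)
    have h := setIntegral_mono_on hIψ2.integrableOn
      ((hint.integrableOn).const_mul (A m)) (hQmeas m) hle
    rw [MeasureTheory.integral_const_mul] at h
    exact h
  have hsqrt_cb : ∀ m, Real.sqrt (c m) ≤ Real.sqrt (A m) * Real.sqrt (b m) := by
    intro m
    rw [← Real.sqrt_mul (hA0 m)]
    exact Real.sqrt_le_sqrt (hcb m)
  have hfin : ∀ F : Finset (Fin d → ℤ),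
      ∑ m ∈ F, Real.sqrt (A m) * Real.sqrt (b m) ≤ Real.sqrt (∑' m, A m) * Real.sqrt I := by
    intro F
    have hCS := Finset.sum_mul_sq_le_sq_mul_sq F (fun m => Real.sqrt (A m))
      (fun m => Real.sqrt (b m))
    have h1 : ∑ m ∈ F, Real.sqrt (A m) ^ 2 = ∑ m ∈ F, A m :=
      Finset.sum_congr rfl fun m _ => Real.sq_sqrt (hA0 m)
    have h2 : ∑ m ∈ F, Real.sqrt (b m) ^ 2 = ∑ m ∈ F, b m :=
      Finset.sum_congr rfl fun m _ => Real.sq_sqrt (hb0 m)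
    rw [h1, h2] at hCS
    have h3 : ∑ m ∈ F, A m ≤ ∑' m, A m := Summable.sum_le_tsum F (fun m _ => hA0 m) hAsum
    have h4 : ∑ m ∈ F, b m ≤ I :=
      (Summable.sum_le_tsum F (fun m _ => hb0 m) hbsum.summable).trans_eq hbsum.tsum_eq
    have hA0' : 0 ≤ ∑ m ∈ F, A m := Finset.sum_nonneg fun m _ => hA0 m
    have hb0' : 0 ≤ ∑ m ∈ F, b m := Finset.sum_nonneg fun m _ => hb0 m
    have htA0 : 0 ≤ ∑' m, A m := tsum_nonneg hA0
    have hs0 : 0 ≤ ∑ m ∈ F, Real.sqrt (A m) * Real.sqrt (b m) :=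
      Finset.sum_nonneg fun m _ => mul_nonneg (Real.sqrt_nonneg _) (Real.sqrt_nonneg _)
    rw [← Real.sqrt_mul htA0]
    rw [Real.le_sqrt hs0 (mul_nonneg htA0 hI0)]
    calc (∑ m ∈ F, Real.sqrt (A m) * Real.sqrt (b m)) ^ 2
        ≤ (∑ m ∈ F, A m) * (∑ m ∈ F, b m) := hCS
      _ ≤ (∑' m, A m) * I := mul_le_mul h3 h4 hb0' htA0
  have hsumc : Summable (fun m => Real.sqrt (c m)) :=
    summable_of_sum_le (fun m => Real.sqrt_nonneg _)
      (fun F => le_trans (Finset.sum_le_sum fun m _ => hsqrt_cb m) (hfin F))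
  refine ⟨hAsum, ?_⟩
  refine Summable.tsum_le_of_sum_le hsumc (fun F => ?_)
  exact le_trans (Finset.sum_le_sum fun m _ => hsqrt_cb m) (hfin F)
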